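/- Let H be a real Hilbert space and T_l : H → H a bounded linear operator with ‖T_l‖ ≤ 1 which is self-adjoint and positive (⟨T_l x, x⟩ ≥ 0 for all x ∈ H). Let z ∈ H, let φ̄ satisfy φ̄ = T_l φ̄ + z, and let (φ_k) be defined by φ_{k+1} := T_l φ_k + z from any φ₁ ∈ H. Then for every k ≥ 1, ‖z − (I − T_l) φ_k‖² ≤ k^{-1} ‖φ̄ − φ₁‖². -/

import Mathlib

/-- Cauchy–Schwarz for a positive symmetric operator. -/
lemma mazya_aux_cs
    {H : Type*} [NormedAddCommGroup H] [InnerProductSpace ℝ H]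
    (A : H →L[ℝ] H)
    (hsym : ∀ x y : H, inner ℝ (A x) y = (inner ℝ x (A y) : ℝ))
    (hpos : ∀ x : H, 0 ≤ (inner ℝ (A x) x : ℝ)) (x y : H) :
    (inner ℝ (A x) y : ℝ) ^ 2 ≤ (inner ℝ (A x) x : ℝ) * (inner ℝ (A y) y : ℝ) := by
  have key : ∀ t : ℝ, 0 ≤ (inner ℝ (A y) y : ℝ) * (t * t) + (2 * (inner ℝ (A x) y : ℝ)) * t
      + (inner ℝ (A x) x : ℝ) := by
    intro t
    have h := hpos (x + t • y)
    have hyx : (inner ℝ (A y) x : ℝ) = (inner ℝ (A x) y : ℝ) := by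
      rw [hsym y x, real_inner_comm]
    simp only [map_add, map_smul, inner_add_left, inner_add_right, inner_smul_left,
      inner_smul_right, RCLike.star_def, starRingEnd_apply, star_trivial] at h
    rw [hyx] at h
    ring_nf at h ⊢
    linarith
  have hd := discrim_le_zero key
  rw [discrim] at hd
  nlinarith [hd]

/-- If `A` is symmetric positive with `⟨Ax,x⟩ ≤ ‖x‖²`, then `‖Ax‖² ≤ ⟨Ax,x⟩`. -/
lemma mazya_aux_sq_le
    {H : Type*} [NormedAddCommGroup H] [InnerProductSpace ℝ H]
    (A : H →L[ℝ] H)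
    (hsym : ∀ x y : H, inner ℝ (A x) y = (inner ℝ x (A y) : ℝ))
    (hpos : ∀ x : H, 0 ≤ (inner ℝ (A x) x : ℝ))
    (hbd : ∀ x : H, (inner ℝ (A x) x : ℝ) ≤ ‖x‖ ^ 2) (x : H) :
    ‖A x‖ ^ 2 ≤ (inner ℝ (A x) x : ℝ) := by
  have h1 := mazya_aux_cs A hsym hpos x (A x)
  have h2 : (inner ℝ (A x) (A x) : ℝ) = ‖A x‖ ^ 2 := real_inner_self_eq_norm_sq _
  have h3 := hbd (A x)
  have h4 := hpos x
  nlinarith [sq_nonneg (‖A x‖), norm_nonneg (A x)]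

/-- Residual estimate for the Maz'ya iteration with a self-adjoint positive
non-expansive operator: `‖z - (I - T_l) φ_k‖² ≤ k⁻¹ ‖φ̄ - φ₁‖²` for every `k ≥ 1`. -/
theorem mazya_residual_sq_le_inv_k
    {H : Type*} [NormedAddCommGroup H] [InnerProductSpace ℝ H] [CompleteSpace H]
    (Tl : H →L[ℝ] H) (hTl : ‖Tl‖ ≤ 1)
    (hsa : ∀ x y : H, inner ℝ (Tl x) y = (inner ℝ x (Tl y) : ℝ))
    (hpos : ∀ x : H, 0 ≤ (inner ℝ (Tl x) x : ℝ))
    (z : H) (φbar : H) (hfix : φbar = Tl φbar + z)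
    (φ : ℕ → H) (hrec : ∀ k, 1 ≤ k → φ (k + 1) = Tl (φ k) + z) :
    ∀ k : ℕ, 1 ≤ k →
      ‖z - (φ k - Tl (φ k))‖ ^ 2 ≤ (k : ℝ)⁻¹ * ‖φbar - φ 1‖ ^ 2 := by
  -- basic bound ⟨Tx,x⟩ ≤ ‖x‖²
  have hbdT : ∀ x : H, (inner ℝ (Tl x) x : ℝ) ≤ ‖x‖ ^ 2 := by
    intro x
    calc (inner ℝ (Tl x) x : ℝ) ≤ ‖Tl x‖ * ‖x‖ := real_inner_le_norm _ _
    _ ≤ (‖Tl‖ * ‖x‖) * ‖x‖ := by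
        have := Tl.le_opNorm x
        nlinarith [norm_nonneg x]
    _ ≤ ‖x‖ ^ 2 := by nlinarith [norm_nonneg x, norm_nonneg (Tl x)]
  have hT2 : ∀ x : H, ‖Tl x‖ ^ 2 ≤ (inner ℝ (Tl x) x : ℝ) :=
    mazya_aux_sq_le Tl hsa hpos hbdT
  -- the operator S = I - T
  set S : H →L[ℝ] H := ContinuousLinearMap.id ℝ H - Tl with hS
  have hSapp : ∀ x : H, S x = x - Tl x := fun x => rfl
  have hsymS : ∀ x y : H, inner ℝ (S x) y = (inner ℝ x (S y) : ℝ) := by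
    intro x y
    simp only [hSapp, inner_sub_left, inner_sub_right, hsa]
  have hposS : ∀ x : H, 0 ≤ (inner ℝ (S x) x : ℝ) := by
    intro x
    have := hT2 x
    have := hpos x
    have h2 : (inner ℝ (S x) x : ℝ) = ‖x‖ ^ 2 - inner ℝ (Tl x) x := by
      simp [hSapp, inner_sub_left, real_inner_self_eq_norm_sq]
    rw [h2]
    have := hbdT x
    linarith
  have hbdS : ∀ x : H, (inner ℝ (S x) x : ℝ) ≤ ‖x‖ ^ 2 := by
    intro x
    have h2 : (inner ℝ (S x) x : ℝ) = ‖x‖ ^ 2 - inner ℝ (Tl x) x := by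
      simp [hSapp, inner_sub_left, real_inner_self_eq_norm_sq]
    have := hpos x
    linarith
  have hS2 : ∀ x : H, ‖S x‖ ^ 2 ≤ (inner ℝ (S x) x : ℝ) :=
    mazya_aux_sq_le S hsymS hposS hbdS
  -- the error sequence
  set e : H := φbar - φ 1 with he
  set u : ℕ → H := fun j => (Tl ^ j) e with hu
  have hu0 : u 0 = e := by simp [hu]
  have husucc : ∀ j, u (j + 1) = Tl (u j) := by
    intro j
    simp only [hu, pow_succ']
    rfl
  set r : ℕ → ℝ := fun j => (inner ℝ (S (u j)) (u j) : ℝ) with hr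
  -- r is antitone
  have hranti : ∀ j, r (j + 1) ≤ r j := by
    intro j
    set v := u j
    have h1 : r j = ‖v‖ ^ 2 - inner ℝ (Tl v) v := by
      simp [hr, hSapp, inner_sub_left, real_inner_self_eq_norm_sq, v]
    have h2 : r (j + 1) = ‖Tl v‖ ^ 2 - inner ℝ (Tl (Tl v)) (Tl v) := by
      rw [hr]
      simp only [husucc j]
      simp [hSapp, inner_sub_left, real_inner_self_eq_norm_sq, v]
    -- 0 ≤ ‖S v‖² and 0 ≤ ⟨T (S v), S v⟩, sum equals r j - r (j+1)
    have h3 : ‖S v‖ ^ 2 = ‖v‖ ^ 2 - 2 * inner ℝ (Tl v) v + ‖Tl v‖ ^ 2 := by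
      rw [hSapp, norm_sub_sq_real]
      rw [real_inner_comm]
    have h4 : (inner ℝ (Tl (S v)) (S v) : ℝ)
        = inner ℝ (Tl v) v - 2 * ‖Tl v‖ ^ 2 + inner ℝ (Tl (Tl v)) (Tl v) := by
      simp only [hSapp, map_sub, inner_sub_left, inner_sub_right]
      have e1 : (inner ℝ (Tl (Tl v)) v : ℝ) = inner ℝ (Tl v) (Tl v) := by
        rw [hsa (Tl v) v, real_inner_comm]
      have e2 : (inner ℝ (Tl v) (Tl v) : ℝ) = ‖Tl v‖ ^ 2 := real_inner_self_eq_norm_sq _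
      rw [e1, e2]
      ring
    have h5 := hpos (S v)
    have h6 : (0:ℝ) ≤ ‖S v‖ ^ 2 := sq_nonneg _
    linarith
  -- key bound: (j+1) * r j + ‖u (j+1)‖² ≤ ‖e‖²
  have hkey : ∀ j : ℕ, ((j : ℝ) + 1) * r j + ‖u (j + 1)‖ ^ 2 ≤ ‖e‖ ^ 2 := by
    intro j
    induction j with
    | zero =>
      have h1 : r 0 = ‖e‖ ^ 2 - inner ℝ (Tl e) e := by
        simp [hr, hu0, hSapp, inner_sub_left, real_inner_self_eq_norm_sq]
      have h2 : ‖u 1‖ ^ 2 ≤ (inner ℝ (Tl e) e : ℝ) := by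
        rw [husucc 0, hu0]; exact hT2 e
      push_cast
      linarith
    | succ j ih =>
      have h1 : r (j + 1) + ‖u (j + 2)‖ ^ 2 ≤ ‖u (j + 1)‖ ^ 2 := by
        have ha : r (j + 1) = ‖u (j+1)‖ ^ 2 - inner ℝ (Tl (u (j+1))) (u (j+1)) := by
          simp [hr, hSapp, inner_sub_left, real_inner_self_eq_norm_sq]
        have hb : ‖u (j + 2)‖ ^ 2 ≤ (inner ℝ (Tl (u (j+1))) (u (j+1)) : ℝ) := by
          rw [husucc (j+1)]; exact hT2 _
        linarith
      have h2 := hranti j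
      push_cast
      push_cast at ih
      nlinarith
  -- identify the error and residual
  have herr : ∀ m : ℕ, φbar - φ (m + 1) = u m := by
    intro m
    induction m with
    | zero => simp [hu0, he]
    | succ m ih =>
      have h1 : φ (m + 1 + 1) = Tl (φ (m + 1)) + z := hrec (m + 1) (Nat.le_add_left 1 m)
      rw [husucc m, ← ih, map_sub]
      conv_lhs => rw [hfix, h1]
      abel
  intro k hk
  obtain ⟨m, rfl⟩ : ∃ m, k = m + 1 := ⟨k - 1, (Nat.succ_pred_eq_of_pos hk).symm⟩
  have hres : z - (φ (m + 1) - Tl (φ (m + 1))) = S (u m) := by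
    have h1 : z = φbar - Tl φbar := by rw [hfix]; abel_nf; rw [← hfix]; abel
    rw [h1, hSapp, ← herr m, map_sub]
    abel
  rw [hres]
  have h1 : ‖S (u m)‖ ^ 2 ≤ r m := hS2 (u m)
  have h2 : ((m : ℝ) + 1) * r m ≤ ‖e‖ ^ 2 := by
    have := hkey m
    nlinarith [sq_nonneg ‖u (m + 1)‖]
  have hm1 : (0:ℝ) < (m : ℝ) + 1 := by positivity
  have h3 : r m ≤ ((m : ℝ) + 1)⁻¹ * ‖e‖ ^ 2 := by
    rw [inv_mul_eq_div, le_div_iff₀ hm1]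
    linarith
  push_cast
  calc ‖S (u m)‖ ^ 2 ≤ r m := h1
  _ ≤ ((m : ℝ) + 1)⁻¹ * ‖e‖ ^ 2 := h3
  _ = ((m : ℝ) + 1)⁻¹ * ‖φbar - φ 1‖ ^ 2 := by rw [he]
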